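/- In a Conway semiring, the group identity for the cyclic group of order 2, namely (a₁ + a₂ a₁* a₂)* (1 + a₂ a₁*) = (a₁ + a₂)*, is equivalent to the identity (a²)* (1 + a) = a* holding for all a. More precisely: a Conway semiring satisfies the first identity for all a₁, a₂ if and only if it satisfies (a²)*(1+a) = a* for all a. -/
import Mathlib


/-- In a Conway semiring, the group identity for the cyclic group of order 2
holds for all `a₁, a₂` iff `(a²)*(1+a) = a*` holds for all `a`. -/
theorem stmt_5 {S : Type*} [Semiring S] (star : S → S)
    (hsum : ∀ a b : S, star (a + b) = star a * star (b * star a))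
    (hprod : ∀ a b : S, star (a * b) = 1 + a * star (b * a) * b) :
    (∀ a₁ a₂ : S,
        star (a₁ + a₂ * star a₁ * a₂) * (1 + a₂ * star a₁) = star (a₁ + a₂)) ↔
    (∀ a : S, star (a * a) * (1 + a) = star a) := by
  constructor
  · intro h a
    have h0 : star (0 : S) = 1 := by
      have := hprod 0 0
      simpa using this
    have := h 0 a
    simpa [h0] using this
  · intro h a₁ a₂
    have e1 : star (a₁ + a₂) = star a₁ * star (a₂ * star a₁) := hsum a₁ a₂
    have e2 : star (a₁ + a₂ * star a₁ * a₂)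
        = star a₁ * star (a₂ * star a₁ * a₂ * star a₁) := hsum _ _
    have e3 := h (a₂ * star a₁)
    have e4 : a₂ * star a₁ * a₂ * star a₁ = (a₂ * star a₁) * (a₂ * star a₁) :=
      mul_assoc _ _ _
    rw [e2, e4, mul_assoc, e3, ← e1]
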